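/- Let i ≥ 1 and let J ⊆ 𝔖 be an ideal containing u^s and p^N for some s, N ∈ ℕ, and satisfying E^{i−1}·J ⊆ Ideal.map φ J (the ideal of 𝔖 generated by φ(J)). If e·(i−1) < 2(p−1), then p^{i−1} ∈ J + u𝔖. (This is the annihilator-ideal core of Theorem 'control of u-torsion' part (2): applied to the annihilator of the u^∞-torsion of i-th mod p^n prismatic cohomology it yields Ann + (u) ⊇ (p^{i−1}, u).) -/

import Mathlib

open PowerSeries Finset

namespace Stmt6Aux

variable {R : Type*} [CommRing R]

lemma coeff_truncSum (f : PowerSeries R) (n m : ℕ) (hm : m < n) :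
    (coeff m) (∑ a ∈ range n, C ((coeff a) f) * X ^ a) = coeff m f := by
  rw [map_sum]
  simp only [coeff_C_mul_X_pow]
  rw [Finset.sum_ite_eq (range n) m (fun a => coeff a f)]
  simp [Finset.mem_range.mpr hm]

lemma coeff_phi {p : ℕ} (hp : 0 < p) (F : R → R)
    (φ : PowerSeries R →+* PowerSeries R) (hφu : φ X = X ^ p)
    (hφC : ∀ x, φ (C x) = C (F x)) (f : PowerSeries R) (c : ℕ) :
    coeff c (φ f) = if p ∣ c then F (coeff (c / p) f) else 0 := by
  obtain ⟨g, hg⟩ : (X : PowerSeries R) ^ (c + 1) ∣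
      (f - ∑ a ∈ range (c + 1), C (coeff a f) * X ^ a) := by
    rw [X_pow_dvd_iff]
    intro m hm
    rw [map_sub, coeff_truncSum f _ m hm, sub_self]
  have hf : f = (∑ a ∈ range (c + 1), C (coeff a f) * X ^ a) + X ^ (c + 1) * g := by
    rw [← hg]; ring
  have h2 : coeff c ((X ^ p) ^ (c + 1) * φ g) = 0 := by
    rw [← pow_mul, mul_comm, coeff_mul_X_pow']
    have : ¬ p * (c + 1) ≤ c := by nlinarith
    simp [this]
  conv_lhs => rw [hf]
  rw [map_add, map_mul, map_pow, hφu, map_add, h2, add_zero, map_sum, map_sum]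
  have h1 : ∀ a ∈ range (c + 1),
      coeff c (φ (C (coeff a f) * X ^ a)) =
        if c = p * a then F (coeff a f) else 0 := by
    intro a _
    rw [map_mul, hφC, map_pow, hφu, ← pow_mul, coeff_C_mul, coeff_X_pow]
    simp [mul_ite]
  rw [Finset.sum_congr rfl h1]
  by_cases hdvd : p ∣ c
  · obtain ⟨t, rfl⟩ := hdvd
    rw [Finset.sum_eq_single t]
    · simp [Nat.mul_div_cancel_left t hp]
    · intro b _ hb
      have : ¬ p * t = p * b := fun h => hb (Nat.eq_of_mul_eq_mul_left hp h.symm)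
      simp [this]
    · intro ht
      exact absurd (Finset.mem_range.mpr (by nlinarith [Nat.le_mul_of_pos_left t hp])) ht
  · rw [if_neg hdvd]
    apply Finset.sum_eq_zero
    intro b _
    have : ¬ c = p * b := fun h => hdvd ⟨b, h⟩
    simp [this]

lemma map_coeff_dvd {p : ℕ} (hp : 0 < p) (F : R → R)
    (φ : PowerSeries R →+* PowerSeries R) (hφu : φ X = X ^ p)
    (hφC : ∀ x, φ (C x) = C (F x))
    (π : R) (hF : ∀ x : R, π ∣ x → π ∣ F x)
    (J : Ideal (PowerSeries R)) (n : ℕ)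
    (hJn : ∀ y ∈ J, ∀ m : ℕ, p * m ≤ n → π ∣ coeff m y)
    {v : PowerSeries R} (hv : v ∈ Ideal.map φ J) : ∀ cc ≤ n, π ∣ coeff cc v := by
  have hv' : v ∈ Ideal.span (⇑φ '' (J : Set (PowerSeries R))) := hv
  refine Submodule.span_induction ?_ ?_ ?_ ?_ hv'
  · rintro x ⟨y, hy, rfl⟩ cc hcc
    rw [coeff_phi hp F φ hφu hφC]
    by_cases hdvd : p ∣ cc
    · rw [if_pos hdvd]
      exact hF _ (hJn y hy _ (by rw [Nat.mul_div_cancel' hdvd]; exact hcc))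
    · rw [if_neg hdvd]; exact dvd_zero _
  · intro cc _; simp
  · intro x y _ _ hx hy cc hcc
    rw [map_add]
    exact dvd_add (hx cc hcc) (hy cc hcc)
  · intro r x _ hx cc hcc
    rw [smul_eq_mul, coeff_mul]
    refine Finset.dvd_sum ?_
    rintro ⟨b1, b2⟩ hb
    rw [Finset.HasAntidiagonal.mem_antidiagonal] at hb
    exact Dvd.dvd.mul_left (hx b2 (by omega)) _

lemma coeff_pow_eq_zero {B : PowerSeries R} {e : ℕ} (hB : ∀ m, e ≤ m → coeff m B = 0) :
    ∀ k, 1 ≤ k → ∀ m, e * k ≤ m → coeff m (B ^ k) = 0 := by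
  intro k
  induction k with
  | zero => omega
  | succ k ih =>
    intro _ m hm
    rcases Nat.eq_zero_or_pos k with rfl | hk
    · simpa using hB m (by omega)
    rw [pow_succ, coeff_mul]
    apply Finset.sum_eq_zero
    rintro ⟨x1, x2⟩ hx
    rw [Finset.HasAntidiagonal.mem_antidiagonal] at hx
    by_cases h : e * k ≤ x1
    · rw [ih hk x1 h, zero_mul]
    · rw [hB x2 (by simp at hx ⊢; nlinarith), mul_zero]

end Stmt6Aux


set_option maxHeartbeats 1000000 in
open Stmt6Aux in

/-- **Theorem 3.3 (2) (cor control u-torsion), annihilator-ideal core.** With `𝔖`, `φ`, and the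
Eisenstein polynomial `E` of degree `e` as usual: if `i ≥ 1`, `J ⊆ 𝔖` is an ideal containing `u^s`
and `p^N` with `E^{i-1}·J ⊆ φ(J)𝔖`, and `e·(i-1) < 2(p-1)`, then `p^{i-1} ∈ J + (u)`. -/
theorem stmt6 (p : ℕ) [Fact p.Prime] (k : Type*) [Field k] [CharP k p] [PerfectField k]
    (φ : PowerSeries (WittVector p k) →+* PowerSeries (WittVector p k))
    (hφu : φ PowerSeries.X = PowerSeries.X ^ p)
    (hφC : ∀ a : WittVector p k,
      φ (PowerSeries.C (R := WittVector p k) a) = PowerSeries.C (R := WittVector p k) (WittVector.frobenius a))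
    (e : ℕ) (he : 1 ≤ e) (a : ℕ → WittVector p k)
    (E : PowerSeries (WittVector p k))
    (hE : E = PowerSeries.X ^ e +
      ∑ j ∈ Finset.range e, PowerSeries.C (R := WittVector p k) (a j) * PowerSeries.X ^ j)
    (haDvd : ∀ j < e, (p : WittVector p k) ∣ a j)
    (ha0 : ¬ ((p : WittVector p k) ^ 2 ∣ a 0))
    (i : ℕ) (hi : 1 ≤ i)
    (J : Ideal (PowerSeries (WittVector p k)))
    (s N : ℕ)
    (hus : (PowerSeries.X : PowerSeries (WittVector p k)) ^ s ∈ J)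
    (hpN : ((p : PowerSeries (WittVector p k)) ^ N) ∈ J)
    (hJ : ∀ x ∈ J, E ^ (i - 1) * x ∈ Ideal.map φ J)
    (hrange : e * (i - 1) < 2 * (p - 1)) :
    ((p : PowerSeries (WittVector p k)) ^ (i - 1)) ∈
      J ⊔ Ideal.span {(PowerSeries.X : PowerSeries (WittVector p k))} := by
  classical
  have hp : p.Prime := Fact.out
  have hppos : 0 < p := hp.pos
  have hp2 : 2 ≤ p := hp.two_le
  have hirr : Irreducible (p : WittVector p k) := WittVector.irreducible p
  have hpW : (p : WittVector p k) ≠ 0 := WittVector.p_nonzero p k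
  have hFdvd : ∀ (r : ℕ) (x : WittVector p k), (p : WittVector p k) ^ r ∣ x →
      (p : WittVector p k) ^ r ∣ WittVector.frobenius x := by
    rintro r x ⟨y, hy⟩
    exact ⟨WittVector.frobenius y, by rw [hy, map_mul, map_pow, map_natCast]⟩
  -- decompose E
  have hb : ∀ j, ∃ bj : WittVector p k, j < e → a j = p * bj := fun j => by
    by_cases h : j < e
    · obtain ⟨cj, hc⟩ := haDvd j h; exact ⟨cj, fun _ => hc⟩
    · exact ⟨0, fun h' => absurd h' h⟩
  choose b hbspec using hb
  set B : PowerSeries (WittVector p k) :=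
    ∑ j ∈ range e, C (b j) * X ^ j with hBdef
  have hEB : E = X ^ e + (p : PowerSeries (WittVector p k)) * B := by
    rw [hE, hBdef, Finset.mul_sum]
    congr 1
    refine Finset.sum_congr rfl fun j hj => ?_
    rw [hbspec j (Finset.mem_range.mp hj), map_mul, map_natCast]
    ring
  have hBcoeff : ∀ m, e ≤ m → coeff m B = 0 := by
    intro m hm
    rw [hBdef, map_sum]
    refine Finset.sum_eq_zero fun j hj => ?_
    rw [coeff_C_mul_X_pow]
    have : ¬ m = j := by simp at hj; omega
    simp [this]
  set d := e * (i - 1) with hd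
  have hEpow : E ^ (i - 1) = ∑ kk ∈ range i,
      ((p : PowerSeries (WittVector p k)) * B) ^ kk * (X ^ e) ^ (i - 1 - kk) *
        ((i - 1).choose kk : PowerSeries (WittVector p k)) := by
    have hii : i - 1 + 1 = i := by omega
    rw [hEB, add_comm ((X : PowerSeries (WittVector p k)) ^ e), add_pow, hii]
  have hcoeffE : ∀ m, coeff m (E ^ (i - 1)) = ∑ kk ∈ range i,
      (p : WittVector p k) ^ kk * ((i - 1).choose kk : WittVector p k) *
        (if e * (i - 1 - kk) ≤ m then coeff (m - e * (i - 1 - kk)) (B ^ kk)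
         else 0) := by
    intro m
    rw [hEpow, map_sum]
    refine Finset.sum_congr rfl fun kk _ => ?_
    have hterm : ((p : PowerSeries (WittVector p k)) * B) ^ kk * (X ^ e) ^ (i - 1 - kk) *
        ((i - 1).choose kk : PowerSeries (WittVector p k)) =
        C ((p : WittVector p k) ^ kk * ((i - 1).choose kk : WittVector p k)) *
          (B ^ kk * X ^ (e * (i - 1 - kk))) := by
      rw [map_mul, map_pow, map_natCast, map_natCast, ← pow_mul]
      ring
    rw [hterm, coeff_C_mul, coeff_mul_X_pow', mul_ite, mul_zero]
  have hcd : coeff d (E ^ (i - 1)) = 1 := by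
    rw [hcoeffE]
    rw [Finset.sum_eq_single 0]
    · simp [hd]
    · intro kk hkk hkk0
      have hkk1 : 1 ≤ kk := Nat.one_le_iff_ne_zero.mpr hkk0
      have hkki : kk ≤ i - 1 := by simp at hkk; omega
      by_cases hle : e * (i - 1 - kk) ≤ d
      · have heq : e * (i - 1 - kk) + e * kk = d := by
          rw [hd, ← Nat.left_distrib]
          congr 1
          omega
        rw [if_pos hle, coeff_pow_eq_zero hBcoeff kk hkk1 _ (by omega), mul_zero]
      · rw [if_neg hle, mul_zero]
    · intro h; exact absurd (Finset.mem_range.mpr (by omega)) h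
  have hcm : ∀ m, m < d → (p : WittVector p k) ∣ coeff m (E ^ (i - 1)) := by
    intro m hm
    rw [hcoeffE]
    refine Finset.dvd_sum fun kk _ => ?_
    rcases Nat.eq_zero_or_pos kk with rfl | hkk1
    · have : ¬ e * (i - 1 - 0) ≤ m := by simp only [Nat.sub_zero]; omega
      rw [if_neg this, mul_zero]
      exact dvd_zero _
    · exact dvd_mul_of_dvd_left
        (dvd_mul_of_dvd_left (dvd_pow_self _ (by omega : kk ≠ 0)) _) _
  have hc1 : 2 ≤ i → (p : WittVector p k) ^ (i - 2) ∣ coeff 1 (E ^ (i - 1)) := by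
    intro hi2
    rw [hcoeffE]
    refine Finset.dvd_sum fun kk _ => ?_
    by_cases hkk2 : i - 2 ≤ kk
    · exact dvd_mul_of_dvd_left (dvd_mul_of_dvd_left (pow_dvd_pow _ hkk2) _) _
    · have h2 : 2 ≤ i - 1 - kk := by omega
      have : ¬ e * (i - 1 - kk) ≤ 1 := by nlinarith
      rw [if_neg this, mul_zero]
      exact dvd_zero _
  have hc0 : coeff 0 (E ^ (i - 1)) = (a 0) ^ (i - 1) := by
    rw [coeff_zero_eq_constantCoeff, map_pow]
    congr 1
    rw [hE, map_add, map_pow, constantCoeff_X, zero_pow (by omega : e ≠ 0), zero_add, map_sum]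
    rw [Finset.sum_eq_single 0 (fun j _ hj => by
        rw [map_mul, map_pow, constantCoeff_X, zero_pow hj, mul_zero])
      (fun h => absurd (Finset.mem_range.mpr (by omega)) h)]
    rw [map_mul, constantCoeff_C, map_pow, constantCoeff_X, pow_zero, mul_one]
  -- minimal Weierstrass degree
  have hone : ¬ (p : WittVector p k) ∣ 1 := fun h => hirr.not_isUnit (isUnit_of_dvd_one h)
  have hex : ∃ n, ∃ x ∈ J, ¬ (p : WittVector p k) ∣ coeff n x := by
    refine ⟨s, X ^ s, hus, ?_⟩
    rw [coeff_X_pow, if_pos rfl]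
    exact hone
  obtain ⟨z, hzJ, hzt⟩ := Nat.find_spec hex
  set t := Nat.find hex with htdef
  have htmin : ∀ l, l < t → ∀ x ∈ J, (p : WittVector p k) ∣ coeff l x := by
    intro l hl x hx
    by_contra hcon
    exact Nat.find_min hex hl ⟨x, hx, hcon⟩
  have main : ∃ x ∈ J, ¬ ((p : WittVector p k) ^ i ∣ coeff 0 x) := by
    have ht1 : t ≤ 1 := by
      by_contra ht2
      push_neg at ht2
      have hdtJ : ∀ y ∈ J, ∀ m : ℕ, p * m ≤ d + t →
          (p : WittVector p k) ^ 1 ∣ coeff m y := by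
        intro y hy m hm
        rw [pow_one]
        refine htmin m ?_ y hy
        have h1 : d < (p - 1) * t := by
          calc d < 2 * (p - 1) := hrange
          _ ≤ t * (p - 1) := Nat.mul_le_mul_right _ (by omega)
          _ = (p - 1) * t := Nat.mul_comm _ _
        have h2 : (p - 1) * t + t = p * t := by
          have hh : p - 1 + 1 = p := by omega
          calc (p - 1) * t + t = ((p - 1) + 1) * t := by ring
          _ = p * t := by rw [hh]
        have h3 : p * m < p * t := by omega
        exact Nat.lt_of_mul_lt_mul_left h3
      have hpw := map_coeff_dvd hppos _ φ hφu hφC _ (hFdvd 1) J (d + t) hdtJ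
        (hJ z hzJ) (d + t) le_rfl
      rw [pow_one] at hpw
      rw [coeff_mul] at hpw
      have hmem : ((d, t) : ℕ × ℕ) ∈ antidiagonal (d + t) := by
        rw [Finset.HasAntidiagonal.mem_antidiagonal]
      have hsum := Finset.add_sum_erase _
        (fun x : ℕ × ℕ => coeff x.1 (E ^ (i - 1)) *
          coeff x.2 z) hmem
      have herase : (p : WittVector p k) ∣
          ∑ x ∈ (antidiagonal (d + t)).erase (d, t),
            coeff x.1 (E ^ (i - 1)) * coeff x.2 z := by
        refine Finset.dvd_sum ?_
        rintro ⟨j, l⟩ hx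
        have hne := Finset.ne_of_mem_erase hx
        have hjl : j + l = d + t := Finset.HasAntidiagonal.mem_antidiagonal.mp (Finset.mem_of_mem_erase hx)
        rcases lt_or_ge l t with hlt | hge
        · exact Dvd.dvd.mul_left (htmin l hlt z hzJ) _
        · have hj : j < d := by
            rcases Nat.eq_or_lt_of_le hge with rfl | hgt
            · exact absurd (by omega : j = d) (by simpa using fun hh => hne (by simp [hh]))
            · omega
          exact Dvd.dvd.mul_right (hcm j hj) _
      have hzdvd : (p : WittVector p k) ∣ coeff t z := by
        have hz : coeff t z =
            (∑ x ∈ antidiagonal (d + t),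
              coeff x.1 (E ^ (i - 1)) * coeff x.2 z) -
            ∑ x ∈ (antidiagonal (d + t)).erase (d, t),
              coeff x.1 (E ^ (i - 1)) * coeff x.2 z := by
          rw [← hsum]
          simp only [hcd, one_mul]
          ring
        rw [hz]
        exact dvd_sub hpw herase
      exact hzt hzdvd
    rcases Nat.eq_zero_or_pos t with ht0 | htpos
    · refine ⟨z, hzJ, fun hdvd => hzt ?_⟩
      rw [ht0]
      exact dvd_trans (dvd_pow_self _ (by omega : i ≠ 0)) hdvd
    · have ht1' : t = 1 := by omega
      by_contra hcon
      push_neg at hcon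
      have hdtJ : ∀ y ∈ J, ∀ m : ℕ, p * m ≤ 1 →
          (p : WittVector p k) ^ i ∣ coeff m y := by
        intro y hy m hm
        have hm0 : m = 0 := by nlinarith
        rw [hm0]
        exact hcon y hy
      have hpw := map_coeff_dvd hppos _ φ hφu hφC _ (hFdvd i) J 1 hdtJ (hJ z hzJ) 1 le_rfl
      have hco : coeff 1 (E ^ (i - 1) * z) =
          coeff 0 (E ^ (i - 1)) * coeff 1 z +
          coeff 1 (E ^ (i - 1)) * coeff 0 z := by
        rw [coeff_mul, Finset.Nat.sum_antidiagonal_eq_sum_range_succ_mk]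
        rw [Finset.sum_range_succ, Finset.sum_range_succ, Finset.sum_range_zero, zero_add]
      have h10 : (p : WittVector p k) ^ i ∣
          coeff 1 (E ^ (i - 1)) * coeff 0 z := by
        rcases Nat.eq_or_lt_of_le hi with h1 | hi2
        · have : (1 : ℕ) - 1 = 0 := rfl
          rw [← h1]
          simp
        · have h2 : (p : WittVector p k) ^ 2 ∣ coeff 0 z :=
            dvd_trans (pow_dvd_pow _ (by omega)) (hcon z hzJ)
          have h3 := mul_dvd_mul (hc1 (by omega)) h2
          rw [← pow_add] at h3
          have h4 : i - 2 + 2 = i := by omega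
          rw [h4] at h3
          exact h3
      have h01 : (p : WittVector p k) ^ i ∣
          coeff 0 (E ^ (i - 1)) * coeff 1 z := by
        rw [hco] at hpw
        simpa using dvd_sub hpw h10
      rw [hc0] at h01
      have ha0ne : a 0 ≠ 0 := fun h => ha0 (h ▸ dvd_zero _)
      obtain ⟨m, u, hu⟩ := WittVector.exists_eq_pow_p_mul' (a 0) ha0ne
      have hm1 : m = 1 := by
        rcases m with _ | _ | m
        · exfalso
          apply hirr.not_isUnit
          have hdvdu : (p : WittVector p k) ∣ (u : WittVector p k) := by
            have : (p : WittVector p k) ∣ a 0 := haDvd 0 (by omega)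
            rwa [hu, pow_zero, one_mul] at this
          exact isUnit_of_dvd_unit hdvdu u.isUnit
        · rfl
        · exfalso
          apply ha0
          rw [hu]
          exact Dvd.dvd.mul_right (pow_dvd_pow _ (by omega)) _
      rw [hm1, pow_one] at hu
      rw [hu, mul_pow] at h01
      have hii : i = (i - 1) + 1 := by omega
      have h01' : (p : WittVector p k) ^ (i - 1) * (p : WittVector p k) ∣
          (p : WittVector p k) ^ (i - 1) *
            ((u : WittVector p k) ^ (i - 1) * coeff 1 z) := by
        rw [← pow_succ, ← hii]
        convert h01 using 1
        ring
      have hpz : (p : WittVector p k) ∣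
          (u : WittVector p k) ^ (i - 1) * coeff 1 z :=
        (mul_dvd_mul_iff_left (pow_ne_zero _ hpW)).mp h01'
      have hz1 : (p : WittVector p k) ∣ coeff 1 z := by
        have hrw : coeff 1 z =
            ((u⁻¹ : (WittVector p k)ˣ) : WittVector p k) ^ (i - 1) *
              ((u : WittVector p k) ^ (i - 1) * coeff 1 z) := by
          rw [← mul_assoc, ← mul_pow, Units.inv_mul, one_pow, one_mul]
        rw [hrw]
        exact Dvd.dvd.mul_left hpz _
      rw [ht1'] at hzt
      exact hzt hz1
  obtain ⟨x, hxJ, hx0⟩ := main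
  have hx0ne : coeff 0 x ≠ 0 := fun h => hx0 (h ▸ dvd_zero _)
  obtain ⟨m, u, hu⟩ := WittVector.exists_eq_pow_p_mul' _ hx0ne
  have hmlt : m ≤ i - 1 := by
    by_contra hm
    exact hx0 (hu ▸ Dvd.dvd.mul_right (pow_dvd_pow _ (by omega)) _)
  have hdvd : coeff 0 x ∣ (p : WittVector p k) ^ (i - 1) := by
    rw [hu]
    exact Units.mul_right_dvd.mpr (pow_dvd_pow _ hmlt)
  obtain ⟨cc, hcc⟩ := hdvd
  have hXmem : x - C (coeff 0 x) ∈
      Ideal.span {(X : PowerSeries (WittVector p k))} := by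
    rw [Ideal.mem_span_singleton, X_dvd_iff, map_sub, constantCoeff_C,
      ← coeff_zero_eq_constantCoeff_apply, sub_self]
  have hfinal : ((p : PowerSeries (WittVector p k)) ^ (i - 1)) =
      C cc * x -
        C cc * (x - C (coeff 0 x)) := by
    have hcast : ((p : PowerSeries (WittVector p k)) ^ (i - 1)) =
        C ((p : WittVector p k) ^ (i - 1)) := by
      rw [map_pow, map_natCast]
    rw [hcast, hcc, map_mul]
    ring
  rw [hfinal]
  exact Submodule.sub_mem _ (Ideal.mem_sup_left (J.mul_mem_left _ hxJ))
    (Ideal.mem_sup_right (Ideal.mul_mem_left _ _ hXmem))
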